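/- arXiv:2405.06139 — 3 statements merged into one kernel-verified Lean document; each statement's English description precedes it below -/
import Mathlib

section
/- For all real x ≥ 190, Li(x) > x/log x + x/(log x)^2, where Li(x) = ∫₂ˣ dt/log t. -/
noncomputable def Li (x : ℝ) : ℝ := ∫ t in (2:ℝ)..x, 1 / Real.log t

open MeasureTheory intervalIntegral

lemma log_pos_two {t : ℝ} (ht : 2 ≤ t) : 0 < Real.log t :=
  Real.log_pos (by linarith)

lemma contOn3 {a b : ℝ} (ha : 2 ≤ a) (hb : 2 ≤ b) :
    ContinuousOn (fun t : ℝ => 1 / Real.log t ^ 3) (Set.uIcc a b) := by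
  have h2 : ∀ t ∈ Set.uIcc a b, 2 ≤ t := by
    intro t htm
    have := htm.1
    have : a ⊓ b ≤ t := htm.1
    exact le_trans (le_inf ha hb) this
  have hsub : Set.uIcc a b ⊆ {(0:ℝ)}ᶜ := by
    intro t htm
    have := h2 t htm
    simp only [Set.mem_compl_iff, Set.mem_singleton_iff]
    linarith
  apply ContinuousOn.div continuousOn_const ((Real.continuousOn_log.mono hsub).pow 3)
  intro t htm
  exact pow_ne_zero 3 (ne_of_gt (log_pos_two (h2 t htm)))

lemma contOn1 {a b : ℝ} (ha : 2 ≤ a) (hb : 2 ≤ b) :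
    ContinuousOn (fun t : ℝ => 1 / Real.log t) (Set.uIcc a b) := by
  have h2 : ∀ t ∈ Set.uIcc a b, 2 ≤ t := by
    intro t htm
    exact le_trans (le_inf ha hb) htm.1
  have hsub : Set.uIcc a b ⊆ {(0:ℝ)}ᶜ := by
    intro t htm
    have := h2 t htm
    simp only [Set.mem_compl_iff, Set.mem_singleton_iff]
    linarith
  apply ContinuousOn.div continuousOn_const (Real.continuousOn_log.mono hsub)
  intro t htm
  exact ne_of_gt (log_pos_two (h2 t htm))

lemma intb3 {a b : ℝ} (ha : 2 ≤ a) (hb : 2 ≤ b) :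
    IntervalIntegrable (fun t : ℝ => 1 / Real.log t ^ 3) volume a b :=
  (contOn3 ha hb).intervalIntegrable

lemma intb1 {a b : ℝ} (ha : 2 ≤ a) (hb : 2 ≤ b) :
    IntervalIntegrable (fun t : ℝ => 1 / Real.log t) volume a b :=
  (contOn1 ha hb).intervalIntegrable

lemma piece {a b L : ℝ} (ha : 2 ≤ a) (hab : a ≤ b) (hL : Real.log b ≤ L) :
    (b - a) / L ^ 3 ≤ ∫ t in a..b, 1 / Real.log t ^ 3 := by
  have hb : 2 ≤ b := le_trans ha hab
  have hL0 : 0 < L := lt_of_lt_of_le (log_pos_two hb) hL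
  have h := intervalIntegral.integral_mono_on (f := fun _ : ℝ => 1 / L ^ 3)
      (g := fun t : ℝ => 1 / Real.log t ^ 3) hab intervalIntegrable_const (intb3 ha hb) ?_
  · rw [intervalIntegral.integral_const, smul_eq_mul, mul_one_div] at h
    exact h
  · intro t htm
    have ht2 : 2 ≤ t := le_trans ha htm.1
    have hlt : 0 < Real.log t := log_pos_two ht2
    have hltL : Real.log t ≤ L :=
      le_trans (Real.log_le_log (by linarith) htm.2) hL
    apply one_div_le_one_div_of_le (by positivity)
    exact pow_le_pow_left₀ (le_of_lt hlt) hltL 3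

lemma chain {a b c u v : ℝ} (ha : 2 ≤ a) (hab : a ≤ b) (hbc : b ≤ c)
    (h1 : u ≤ ∫ t in a..b, 1 / Real.log t ^ 3)
    (h2 : v ≤ ∫ t in b..c, 1 / Real.log t ^ 3) :
    u + v ≤ ∫ t in a..c, 1 / Real.log t ^ 3 := by
  rw [← intervalIntegral.integral_add_adjacent_intervals
      (intb3 ha (ha.trans hab)) (intb3 (ha.trans hab) ((ha.trans hab).trans hbc))]
  exact add_le_add h1 h2

set_option maxHeartbeats 1200000 in
lemma main_int : (3.53 : ℝ) ≤ ∫ t in (2:ℝ)..190, 1 / Real.log t ^ 3 := by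
  set s := Real.sqrt 2 with hs
  have hs2 : s ^ 2 = 2 := Real.sq_sqrt (by norm_num)
  have hs0 : (0:ℝ) ≤ s := Real.sqrt_nonneg 2
  have hsl : 1.414213 ≤ s := by nlinarith
  have hsu : s ≤ 1.414214 := by nlinarith
  have hl2u : Real.log 2 < 0.6931471808 := Real.log_two_lt_d9
  have hlogs : Real.log s = Real.log 2 / 2 := Real.log_sqrt (by norm_num)
  have hspos : (0:ℝ) < s := by linarith
  -- logs of powers of two
  have l4 : Real.log 4 = 2 * Real.log 2 := by
    rw [show (4:ℝ) = 2^2 by norm_num, Real.log_pow]; push_cast; ring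
  have l8 : Real.log 8 = 3 * Real.log 2 := by
    rw [show (8:ℝ) = 2^3 by norm_num, Real.log_pow]; push_cast; ring
  have l16 : Real.log 16 = 4 * Real.log 2 := by
    rw [show (16:ℝ) = 2^4 by norm_num, Real.log_pow]; push_cast; ring
  have l32 : Real.log 32 = 5 * Real.log 2 := by
    rw [show (32:ℝ) = 2^5 by norm_num, Real.log_pow]; push_cast; ring
  have l64 : Real.log 64 = 6 * Real.log 2 := by
    rw [show (64:ℝ) = 2^6 by norm_num, Real.log_pow]; push_cast; ring
  have l128 : Real.log 128 = 7 * Real.log 2 := by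
    rw [show (128:ℝ) = 2^7 by norm_num, Real.log_pow]; push_cast; ring
  have l256 : Real.log 256 = 8 * Real.log 2 := by
    rw [show (256:ℝ) = 2^8 by norm_num, Real.log_pow]; push_cast; ring
  have l190 : Real.log 190 ≤ 8 * Real.log 2 := by
    rw [← l256]; exact Real.log_le_log (by norm_num) (by norm_num)
  -- logs of 2^k * s
  have lm : ∀ c : ℝ, 0 < c → Real.log (c * s) = Real.log c + Real.log 2 / 2 := by
    intro c hc
    rw [Real.log_mul (ne_of_gt hc) (ne_of_gt hspos), hlogs]
  -- piece bounds
  have p1 : (0.736:ℝ) ≤ ∫ t in (2:ℝ)..(2*s), 1 / Real.log t ^ 3 := by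
    refine le_trans ?_ (piece (le_refl 2) (by linarith) (L := 1.0398)
      (by rw [lm 2 (by norm_num)]; linarith))
    rw [le_div_iff₀ (by norm_num)]; norm_num; linarith
  have p2 : (0.439:ℝ) ≤ ∫ t in (2*s:ℝ)..4, 1 / Real.log t ^ 3 := by
    refine le_trans ?_ (piece (by linarith) (by linarith) (L := 1.3863)
      (by rw [l4]; linarith))
    rw [le_div_iff₀ (by norm_num)]; norm_num; linarith
  have p3 : (0.318:ℝ) ≤ ∫ t in (4:ℝ)..(4*s), 1 / Real.log t ^ 3 := by
    refine le_trans ?_ (piece (by norm_num) (by linarith) (L := 1.7329)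
      (by rw [lm 4 (by norm_num), l4]; linarith))
    rw [le_div_iff₀ (by norm_num)]; norm_num; linarith
  have p4 : (0.260:ℝ) ≤ ∫ t in (4*s:ℝ)..8, 1 / Real.log t ^ 3 := by
    refine le_trans ?_ (piece (by linarith) (by linarith) (L := 2.0795)
      (by rw [l8]; linarith))
    rw [le_div_iff₀ (by norm_num)]; norm_num; linarith
  have p5 : (0.232:ℝ) ≤ ∫ t in (8:ℝ)..(8*s), 1 / Real.log t ^ 3 := by
    refine le_trans ?_ (piece (by norm_num) (by linarith) (L := 2.4261)
      (by rw [lm 8 (by norm_num), l8]; linarith))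
    rw [le_div_iff₀ (by norm_num)]; norm_num; linarith
  have p6 : (0.219:ℝ) ≤ ∫ t in (8*s:ℝ)..16, 1 / Real.log t ^ 3 := by
    refine le_trans ?_ (piece (by linarith) (by linarith) (L := 2.7726)
      (by rw [l16]; linarith))
    rw [le_div_iff₀ (by norm_num)]; norm_num; linarith
  have p7 : (0.218:ℝ) ≤ ∫ t in (16:ℝ)..(16*s), 1 / Real.log t ^ 3 := by
    refine le_trans ?_ (piece (by norm_num) (by linarith) (L := 3.1192)
      (by rw [lm 16 (by norm_num), l16]; linarith))
    rw [le_div_iff₀ (by norm_num)]; norm_num; linarith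
  have p8 : (0.225:ℝ) ≤ ∫ t in (16*s:ℝ)..32, 1 / Real.log t ^ 3 := by
    refine le_trans ?_ (piece (by linarith) (by linarith) (L := 3.4658)
      (by rw [l32]; linarith))
    rw [le_div_iff₀ (by norm_num)]; norm_num; linarith
  have p9 : (0.239:ℝ) ≤ ∫ t in (32:ℝ)..(32*s), 1 / Real.log t ^ 3 := by
    refine le_trans ?_ (piece (by norm_num) (by linarith) (L := 3.8124)
      (by rw [lm 32 (by norm_num), l32]; linarith))
    rw [le_div_iff₀ (by norm_num)]; norm_num; linarith
  have p10 : (0.260:ℝ) ≤ ∫ t in (32*s:ℝ)..64, 1 / Real.log t ^ 3 := by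
    refine le_trans ?_ (piece (by linarith) (by linarith) (L := 4.1589)
      (by rw [l64]; linarith))
    rw [le_div_iff₀ (by norm_num)]; norm_num; linarith
  have p11 : (0.289:ℝ) ≤ ∫ t in (64:ℝ)..(64*s), 1 / Real.log t ^ 3 := by
    refine le_trans ?_ (piece (by norm_num) (by linarith) (L := 4.5055)
      (by rw [lm 64 (by norm_num), l64]; linarith))
    rw [le_div_iff₀ (by norm_num)]; norm_num; linarith
  have p12 : (0.328:ℝ) ≤ ∫ t in (64*s:ℝ)..128, 1 / Real.log t ^ 3 := by
    refine le_trans ?_ (piece (by linarith) (by linarith) (L := 4.8521)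
      (by rw [l128]; linarith))
    rw [le_div_iff₀ (by norm_num)]; norm_num; linarith
  have p13 : (0.363:ℝ) ≤ ∫ t in (128:ℝ)..190, 1 / Real.log t ^ 3 := by
    refine le_trans ?_ (piece (by norm_num) (by norm_num) (L := 5.5452)
      (by linarith))
    rw [le_div_iff₀ (by norm_num)]; norm_num
  -- chain everything
  have c1 := chain (le_refl 2) (by linarith) (by linarith) p1 p2
  have c2 := chain (le_refl 2) (by linarith) (by linarith) c1 p3
  have c3 := chain (le_refl 2) (by linarith) (by linarith) c2 p4
  have c4 := chain (le_refl 2) (by linarith) (by linarith) c3 p5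
  have c5 := chain (le_refl 2) (by linarith) (by linarith) c4 p6
  have c6 := chain (le_refl 2) (by linarith) (by linarith) c5 p7
  have c7 := chain (le_refl 2) (by linarith) (by linarith) c6 p8
  have c8 := chain (le_refl 2) (by linarith) (by linarith) c7 p9
  have c9 := chain (le_refl 2) (by linarith) (by linarith) c8 p10
  have c10 := chain (le_refl 2) (by linarith) (by linarith) c9 p11
  have c11 := chain (le_refl 2) (by linarith) (by linarith) c10 p12
  have c12 := chain (le_refl 2) (by linarith) (by norm_num) c11 p13
  refine le_trans (by norm_num) c12

lemma hasDerivF {t : ℝ} (ht : 2 ≤ t) :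
    HasDerivAt (fun u : ℝ => u / Real.log u + u / Real.log u ^ 2)
      (1 / Real.log t - 2 * (1 / Real.log t ^ 3)) t := by
  have ht0 : (0:ℝ) < t := by linarith
  have hlt : 0 < Real.log t := log_pos_two ht
  have hlne : Real.log t ≠ 0 := ne_of_gt hlt
  have htne : t ≠ 0 := ne_of_gt ht0
  have hl : HasDerivAt Real.log (1/t) t := by
    rw [one_div]; exact Real.hasDerivAt_log htne
  have h1 : HasDerivAt (fun u : ℝ => u / Real.log u)
      ((1 * Real.log t - t * (1/t)) / Real.log t ^ 2) t :=
    (hasDerivAt_id t).div hl hlne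
  have h2 : HasDerivAt (fun u : ℝ => u / Real.log u ^ 2)
      ((1 * Real.log t ^ 2 - t * ((2:ℕ) * Real.log t ^ 1 * (1/t))) / (Real.log t ^ 2) ^ 2) t :=
    (hasDerivAt_id t).div (hl.pow 2) (pow_ne_zero 2 hlne)
  have := h1.add h2
  convert this using 1
  · rfl
  · rfl
  · rfl
  field_simp
  ring

lemma key {x : ℝ} (hx : 2 ≤ x) :
    Li x = (x / Real.log x + x / Real.log x ^ 2)
      - (2 / Real.log 2 + 2 / Real.log 2 ^ 2)
      + 2 * ∫ t in (2:ℝ)..x, 1 / Real.log t ^ 3 := by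
  have hint3 : IntervalIntegrable (fun t : ℝ => 2 * (1 / Real.log t ^ 3)) volume 2 x :=
    (intb3 (le_refl 2) hx).const_mul 2
  have hftc : ∫ t in (2:ℝ)..x, (1 / Real.log t - 2 * (1 / Real.log t ^ 3))
      = (x / Real.log x + x / Real.log x ^ 2)
        - (2 / Real.log 2 + 2 / Real.log 2 ^ 2) := by
    apply intervalIntegral.integral_eq_sub_of_hasDerivAt
    · intro t htm
      rw [Set.uIcc_of_le hx] at htm
      exact hasDerivF htm.1
    · exact (intb1 (le_refl 2) hx).sub hint3
  have hsub : ∫ t in (2:ℝ)..x, (1 / Real.log t - 2 * (1 / Real.log t ^ 3))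
      = (∫ t in (2:ℝ)..x, 1 / Real.log t) - ∫ t in (2:ℝ)..x, 2 * (1 / Real.log t ^ 3) :=
    intervalIntegral.integral_sub (intb1 (le_refl 2) hx) hint3
  have hcm : ∫ t in (2:ℝ)..x, 2 * (1 / Real.log t ^ 3)
      = 2 * ∫ t in (2:ℝ)..x, 1 / Real.log t ^ 3 :=
    intervalIntegral.integral_const_mul 2 _
  have : Li x = ∫ t in (2:ℝ)..x, 1 / Real.log t := rfl
  rw [this]
  rw [hsub, hcm] at hftc
  linarith

theorem Li_lower_bound (x : ℝ) (hx : 190 ≤ x) :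
    x / Real.log x + x / (Real.log x) ^ 2 < Li x := by
  have hx2 : (2:ℝ) ≤ x := by linarith
  have hkey := key hx2
  have hsplit : (∫ t in (2:ℝ)..190, 1 / Real.log t ^ 3)
      + ∫ t in (190:ℝ)..x, 1 / Real.log t ^ 3
      = ∫ t in (2:ℝ)..x, 1 / Real.log t ^ 3 :=
    intervalIntegral.integral_add_adjacent_intervals
      (intb3 (le_refl 2) (by norm_num)) (intb3 (by norm_num) hx2)
  have htail : 0 ≤ ∫ t in (190:ℝ)..x, 1 / Real.log t ^ 3 := by
    apply intervalIntegral.integral_nonneg hx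
    intro u hu
    have : 0 < Real.log u := log_pos_two (by linarith [hu.1])
    positivity
  have hmain := main_int
  have hlog2 : (0.6931471803:ℝ) < Real.log 2 := Real.log_two_gt_d9
  have hp : (0:ℝ) < Real.log 2 := by linarith
  have h1 : 2 / Real.log 2 < 2.8854 := by
    rw [div_lt_iff₀ hp]; nlinarith
  have h2 : 2 / Real.log 2 ^ 2 < 4.164 := by
    rw [div_lt_iff₀ (by positivity)]; nlinarith
  linarith
end

section
/- For all integers n in [19, 10^6], π(n;4,3) > n/(2 log n). -/
set_option maxRecDepth 100000

noncomputable def piMod4 (x : ℝ) (a : ℕ) : ℕ :=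
  ((Finset.range (⌊x⌋₊ + 1)).filter (fun p => p.Prime ∧ p % 4 = a)).card

def P : ℕ := 19590340644999083431262508198206381046123972390589368223882605328968666316379870661851951648789482321596229559115436019149189529725215266728292282990852649023362731392404017939142010958261393634959471483757196721672243410067118516227661133135192488848989914892157188308679896875137439519338903968094905549750386407106033836586660683539201011635917900039904495065203299749542985993134669814805318474080581207891125910

def prList : List ℕ := [2,3,5,7,11,13,17,19,23,29,31,37,41,43,47,53,59,61,67,71,73,79,83,89,97,101,103,107,109,113,127,131,137,139,149,151,157,163,167,173,179,181,191,193,197,199,211,223,227,229,233,239,241,251,257,263,269,271,277,281,283,293,307,311,313,317,331,337,347,349,353,359,367,373,379,383,389,397,401,409,419,421,431,433,439,443,449,457,461,463,467,479,487,491,499,503,509,521,523,541,547,557,563,569,571,577,587,593,599,601,607,613,617,619,631,641,643,647,653,659,661,673,677,683,691,701,709,719,727,733,739,743,751,757,761,769,773,787,797,809,811,821,823,827,829,839,853,857,859,863,877,881,883,887,907,911,919,929,937,941,947,953,967,971,977,983,991,997]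

def chk (n : ℕ) : ℕ → ℕ → Bool
  | 0, _ => true
  | (f+1), d => if n < d*d then true else if n % d = 0 then false else chk n f (d+2)

def isSmall (n : ℕ) : Bool := 2 ≤ n && (n == 2 || (n % 2 != 0 && chk n 16 3))

def isPrime' (n : ℕ) : Bool := if n ≤ 1000 then isSmall n else Nat.beq (Nat.gcd n P) 1

def cnt2 : ℕ → ℕ → ℕ
  | 0, i => cond (isPrime' i) 1 0
  | (k+1), i => cnt2 k i + cnt2 k (i + 4 * 2^k)

def F (m : ℕ) : ℕ := ((Finset.range (m+1)).filter (fun p => p.Prime ∧ p % 4 = 3)).card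

lemma chk_complete (n : ℕ) (hn : n.Prime) : ∀ (f d : ℕ), 2 ≤ d → chk n f d = true := by
  intro f
  induction f with
  | zero => intro d _; rfl
  | succ f ih =>
    intro d hd
    rw [chk]
    by_cases h1 : n < d*d
    · simp [h1]
    · have h2 : n % d ≠ 0 := by
        intro h0
        have hdvd : d ∣ n := Nat.dvd_of_mod_eq_zero h0
        have := (Nat.Prime.eq_one_or_self_of_dvd hn d hdvd)
        rcases this with h | h
        · omega
        · have hdd : d*d ≤ n := le_of_not_gt h1
          nlinarith [hn.two_le, h]
      simp [h1, h2]
      exact ih (d+2) (by omega)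

lemma chk_sound (n : ℕ) : ∀ (f d : ℕ), chk n f d = true →
    ∀ j, j < f → (d+2*j)*(d+2*j) ≤ n → ¬((d+2*j) ∣ n) := by
  intro f
  induction f with
  | zero => intro d _ j hj; omega
  | succ f ih =>
    intro d hc j hj hsq
    rw [chk] at hc
    by_cases h1 : n < d*d
    · exfalso
      have : d*d ≤ (d+2*j)*(d+2*j) := Nat.mul_le_mul (by omega) (by omega)
      omega
    · simp only [h1, if_false] at hc
      by_cases h2 : n % d = 0
      · simp [h2] at hc
      · simp only [h2, if_false] at hc
        rcases Nat.eq_zero_or_pos j with hj0 | hjp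
        · subst hj0
          simp only [Nat.mul_zero, Nat.add_zero]
          exact fun hd => h2 (Nat.mod_eq_zero_of_dvd hd)
        · have := ih (d+2) hc (j-1) (by omega) (by
            have : d+2+2*(j-1) = d+2*j := by omega
            rw [this]; exact hsq)
          have heq : d+2+2*(j-1) = d+2*j := by omega
          rw [heq] at this
          exact this

lemma isSmall_complete (n : ℕ) (hn : n.Prime) : isSmall n = true := by
  unfold isSmall
  have h2 : 2 ≤ n := hn.two_le
  by_cases he : n = 2
  · subst he; rfl
  · have hodd : n % 2 ≠ 0 := by
      intro h0
      have : (2:ℕ) ∣ n := Nat.dvd_of_mod_eq_zero h0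
      rcases hn.eq_one_or_self_of_dvd 2 this with h | h <;> omega
    have hodd' : n % 2 = 1 := by omega
    simp [h2, he, hodd', chk_complete n hn 16 3 (by omega)]

lemma isSmall_sound (n : ℕ) (hle : n ≤ 1050) (h : isSmall n = true) : n.Prime := by
  unfold isSmall at h
  simp only [Bool.and_eq_true, Bool.or_eq_true, decide_eq_true_eq, beq_iff_eq,
    bne_iff_ne, ne_eq, Bool.not_eq_true'] at h
  obtain ⟨h2, h⟩ := h
  rcases h with rfl | ⟨hodd, hchk⟩
  · exact Nat.prime_two
  · by_contra hnp
    have hq := Nat.minFac_prime (by omega : n ≠ 1)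
    have hqd := Nat.minFac_dvd n
    have hsq : n.minFac ^ 2 ≤ n := Nat.minFac_sq_le_self (by omega) hnp
    set q := n.minFac with hqdef
    have hq2 : q ≠ 2 := by
      intro h2q
      rw [h2q] at hqd
      have := Nat.mod_eq_zero_of_dvd hqd
      omega
    have hqodd : q % 2 = 1 := by
      rcases Nat.mod_two_eq_zero_or_one q with h | h
      · exfalso
        have : (2:ℕ) ∣ q := Nat.dvd_of_mod_eq_zero h
        have := (Nat.Prime.eq_one_or_self_of_dvd hq 2 this)
        omega
      · exact h
    have hq3 : 3 ≤ q := by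
      have := hq.two_le
      omega
    have hq31 : q ≤ 32 := by nlinarith [hsq]
    have hj : q = 3 + 2*((q-3)/2) := by omega
    have := chk_sound n 16 3 hchk ((q-3)/2) (by omega) (by rw [← hj]; nlinarith) 
    rw [← hj] at this
    exact this hqd

example : True := trivial

lemma hP : P = prList.prod := by decide +kernel

lemma prList_le : ∀ q ∈ prList, 2 ≤ q ∧ q ≤ 1000 := by decide

lemma small_all : (List.range 1001).all (fun q => !(isSmall q) || prList.contains q) = true := by decide +kernel

lemma mem_prList (q : ℕ) (hq : q.Prime) (hle : q ≤ 1000) : q ∈ prList := by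
  have h := List.all_eq_true.mp small_all q (List.mem_range.mpr (by omega))
  rw [isSmall_complete q hq] at h
  simp only [Bool.not_true, Bool.false_or] at h
  exact List.elem_iff.mp h

lemma isPrime'_iff (n : ℕ) (hn : n ≤ 10^6) : isPrime' n = true ↔ n.Prime := by
  unfold isPrime'
  by_cases h : n ≤ 1000
  · rw [if_pos h]
    exact ⟨isSmall_sound n (by omega), isSmall_complete n⟩
  · rw [if_neg h]
    push_neg at h
    rw [Nat.beq_eq]
    constructor
    · intro hgcd
      by_contra hnp
      have hq := Nat.minFac_prime (by omega : n ≠ 1)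
      have hqd := Nat.minFac_dvd n
      have hsq : n.minFac ^ 2 ≤ n := Nat.minFac_sq_le_self (by omega) hnp
      have hqle : n.minFac ≤ 1000 := by nlinarith [hsq, hq.two_le]
      have hmem : n.minFac ∈ prList := mem_prList _ hq hqle
      have hdvdP : n.minFac ∣ P := hP ▸ List.dvd_prod hmem
      have : n.minFac ∣ Nat.gcd n P := Nat.dvd_gcd hqd hdvdP
      rw [hgcd] at this
      have := Nat.le_of_dvd (by omega) this
      have := hq.two_le
      omega
    · intro hp
      have hd : Nat.gcd n P ∣ n := Nat.gcd_dvd_left n P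
      rcases (Nat.Prime.eq_one_or_self_of_dvd hp _ hd) with h1 | h1
      · exact h1
      · exfalso
        have hnP : n ∣ P := h1 ▸ Nat.gcd_dvd_right n P
        rw [hP] at hnP
        obtain ⟨q, hqm, hnq⟩ := (Nat.Prime.prime hp).dvd_prod_iff.mp hnP
        have hq2 := (prList_le q hqm).1
        have hqle := (prList_le q hqm).2
        have := Nat.le_of_dvd (by omega) hnq
        omega

lemma F_succ (m : ℕ) : F (m+1) = F m + (if ((m+1).Prime ∧ (m+1) % 4 = 3) then 1 else 0) := by
  unfold F
  rw [Finset.range_add_one, Finset.filter_insert]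
  by_cases h : (m+1).Prime ∧ (m+1) % 4 = 3
  · rw [if_pos h, if_pos h, Finset.card_insert_of_notMem (by
      intro hmem
      exact absurd (Finset.mem_range.mp (Finset.mem_filter.mp hmem).1) (by omega))]
  · rw [if_neg h, if_neg h]; simp

lemma F_add4 (a : ℕ) (h3 : a % 4 = 3) :
    F (a+4) = F a + (if (a+4).Prime then 1 else 0) := by
  have e1 : F (a+1) = F a := by rw [F_succ]; rw [if_neg (by omega ∘ And.right)]; simp
  have e2 : F (a+2) = F a := by rw [show a+2 = (a+1)+1 by ring, F_succ, e1]; rw [if_neg (by omega ∘ And.right)]; simp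
  have e3 : F (a+3) = F a := by rw [show a+3 = (a+2)+1 by ring, F_succ, e2]; rw [if_neg (by omega ∘ And.right)]; simp
  have h4 : (a+4) % 4 = 3 := by omega
  rw [show a+4 = (a+3)+1 by ring, F_succ, e3]
  by_cases hp : (a+4).Prime
  · rw [if_pos ⟨hp, h4⟩, if_pos hp]
  · rw [if_neg (fun h => hp h.1), if_neg hp]

lemma F_cnt : ∀ (k a : ℕ), a % 4 = 3 → a + 4*2^k ≤ 10^6 → F (a + 4*2^k) = F a + cnt2 k (a+4) := by
  intro k
  induction k with
  | zero =>
    intro a h3 hle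
    norm_num at hle ⊢
    rw [F_add4 a h3, cnt2]
    congr 1
    have hiff := isPrime'_iff (a+4) (by omega)
    by_cases hp : (a+4).Prime
    · rw [if_pos hp, hiff.mpr hp]; rfl
    · have hf : isPrime' (a+4) = false := by
        cases hb : isPrime' (a+4)
        · rfl
        · exact absurd (hiff.mp hb) hp
      rw [if_neg hp, hf]; rfl
  | succ k ih =>
    intro a h3 hle
    have hsplit : a + 4*2^(k+1) = (a + 4*2^k) + 4*2^k := by ring
    rw [hsplit, ih (a + 4*2^k) (by omega) (by rw [← hsplit]; exact hle),
        ih a h3 (by have : (0:ℕ) < 2^k := (by positivity); omega),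
        cnt2, show a + 4*2^k + 4 = (a+4) + 4*2^k by ring, Nat.add_assoc]

lemma F_step (k a b c v : ℕ) (h3 : a % 4 = 3) (hab : a + 4*2^k = b) (hb : b ≤ 10^6)
    (hFa : F a = c) (hv : cnt2 k (a+4) = v) : F b = c + v := by
  subst hab
  rw [F_cnt k a h3 hb, hFa, hv]

lemma piMod4_natCast (m : ℕ) : piMod4 (m:ℝ) 3 = F m := by
  unfold piMod4 F
  rw [Nat.floor_natCast]

lemma F_mono {a n : ℕ} (h : a ≤ n) : F a ≤ F n :=
  Finset.card_le_card (Finset.filter_subset_filter _ (Finset.range_subset_range.mpr (by omega)))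

lemma logLB (k a : ℕ) (ha : 0 < a) :
    (k : ℝ) * 0.6931471803 + (1 - 2^k / a) ≤ Real.log a := by
  have haR : (0:ℝ) < a := by exact_mod_cast ha
  have h2 : (0:ℝ) < 2^k := by positivity
  have h1 : Real.log ((2:ℝ)^k / a) ≤ 2^k/a - 1 := Real.log_le_sub_one_of_pos (by positivity)
  have h4 : Real.log ((2:ℝ)^k / a) = Real.log ((2:ℝ)^k) - Real.log a :=
    Real.log_div (by positivity) (by positivity)
  have h3 : Real.log ((2:ℝ)^k) = k * Real.log 2 := by rw [Real.log_pow]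
  have h5 : (0.6931471803:ℝ) ≤ Real.log 2 := le_of_lt Real.log_two_gt_d9
  have h6 : (k:ℝ) * 0.6931471803 ≤ (k:ℝ) * Real.log 2 :=
    mul_le_mul_of_nonneg_left h5 (Nat.cast_nonneg k)
  linarith

lemma key_s9 (a b c k : ℕ) (n : ℕ)
    (ha19 : 19 ≤ a) (han : a ≤ n) (hnb : n ≤ b)
    (hFa : F a = c)
    (hb : (b:ℝ) < 2 * c * ((k : ℝ) * 0.6931471803 + (1 - 2^k / a)))
    (hl0 : (0:ℝ) < (k : ℝ) * 0.6931471803 + (1 - 2^k / a)) :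
    (n:ℝ) / (2 * Real.log n) < piMod4 (n:ℝ) 3 := by
  set L : ℝ := (k : ℝ) * 0.6931471803 + (1 - 2^k / a) with hL
  have hla : L ≤ Real.log a := logLB k a (by omega)
  have haR : (0:ℝ) < a := by exact_mod_cast (by omega : 0 < a)
  have hanR : (a:ℝ) ≤ n := by exact_mod_cast han
  have hnbR : (n:ℝ) ≤ b := by exact_mod_cast hnb
  have hln : L ≤ Real.log n := hla.trans (Real.log_le_log haR hanR)
  have hcF : (c:ℝ) ≤ (piMod4 (n:ℝ) 3 : ℝ) := by
    have hcc : c ≤ F n := hFa ▸ F_mono han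
    rw [piMod4_natCast]
    exact_mod_cast hcc
  have hc0 : (0:ℝ) ≤ c := Nat.cast_nonneg c
  have hmain : (n:ℝ) / (2*Real.log n) < c := by
    rw [div_lt_iff₀ (by linarith)]
    nlinarith [mul_le_mul_of_nonneg_left hln (by linarith : (0:ℝ) ≤ 2*c)]
  linarith [hmain, hcF]
theorem F_3 : F 3 = 1 := by decide

theorem F_19 : F 19 = 4 := by
  have h := F_step 2 3 19 1 3 (by norm_num) (by norm_num) (by norm_num) F_3 (by decide +kernel)
  omega

theorem F_23 : F 23 = 5 := by
  have h := F_step 0 19 23 4 1 (by norm_num) (by norm_num) (by norm_num) F_19 (by decide +kernel)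
  omega

theorem F_27 : F 27 = 5 := by
  have h := F_step 0 23 27 5 0 (by norm_num) (by norm_num) (by norm_num) F_23 (by decide +kernel)
  omega

theorem F_31 : F 31 = 6 := by
  have h := F_step 0 27 31 5 1 (by norm_num) (by norm_num) (by norm_num) F_27 (by decide +kernel)
  omega

theorem F_39 : F 39 = 6 := by
  have h := F_step 1 31 39 6 0 (by norm_num) (by norm_num) (by norm_num) F_31 (by decide +kernel)
  omega

theorem F_43 : F 43 = 7 := by
  have h := F_step 0 39 43 6 1 (by norm_num) (by norm_num) (by norm_num) F_39 (by decide +kernel)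
  omega

theorem F_51 : F 51 = 8 := by
  have h := F_step 1 43 51 7 1 (by norm_num) (by norm_num) (by norm_num) F_43 (by decide +kernel)
  omega

theorem F_59 : F 59 = 9 := by
  have h := F_step 1 51 59 8 1 (by norm_num) (by norm_num) (by norm_num) F_51 (by decide +kernel)
  omega

theorem F_67 : F 67 = 10 := by
  have h := F_step 1 59 67 9 1 (by norm_num) (by norm_num) (by norm_num) F_59 (by decide +kernel)
  omega

theorem F_83 : F 83 = 13 := by
  have h := F_step 2 67 83 10 3 (by norm_num) (by norm_num) (by norm_num) F_67 (by decide +kernel)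
  omega

theorem F_99 : F 99 = 13 := by
  have h := F_step 2 83 99 13 0 (by norm_num) (by norm_num) (by norm_num) F_83 (by decide +kernel)
  omega

theorem F_115 : F 115 = 15 := by
  have h := F_step 2 99 115 13 2 (by norm_num) (by norm_num) (by norm_num) F_99 (by decide +kernel)
  omega

theorem F_131 : F 131 = 17 := by
  have h := F_step 2 115 131 15 2 (by norm_num) (by norm_num) (by norm_num) F_115 (by decide +kernel)
  omega

theorem F_163 : F 163 = 20 := by
  have h := F_step 3 131 163 17 3 (by norm_num) (by norm_num) (by norm_num) F_131 (by decide +kernel)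
  omega

theorem F_195 : F 195 = 23 := by
  have h := F_step 3 163 195 20 3 (by norm_num) (by norm_num) (by norm_num) F_163 (by decide +kernel)
  omega

theorem F_227 : F 227 = 27 := by
  have h := F_step 3 195 227 23 4 (by norm_num) (by norm_num) (by norm_num) F_195 (by decide +kernel)
  omega

theorem F_259 : F 259 = 29 := by
  have h := F_step 3 227 259 27 2 (by norm_num) (by norm_num) (by norm_num) F_227 (by decide +kernel)
  omega

theorem F_291 : F 291 = 32 := by
  have h := F_step 3 259 291 29 3 (by norm_num) (by norm_num) (by norm_num) F_259 (by decide +kernel)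
  omega

theorem F_355 : F 355 = 36 := by
  have h := F_step 4 291 355 32 4 (by norm_num) (by norm_num) (by norm_num) F_291 (by decide +kernel)
  omega

theorem F_419 : F 419 = 41 := by
  have h := F_step 4 355 419 36 5 (by norm_num) (by norm_num) (by norm_num) F_355 (by decide +kernel)
  omega

theorem F_483 : F 483 = 47 := by
  have h := F_step 4 419 483 41 6 (by norm_num) (by norm_num) (by norm_num) F_419 (by decide +kernel)
  omega

theorem F_547 : F 547 = 53 := by
  have h := F_step 4 483 547 47 6 (by norm_num) (by norm_num) (by norm_num) F_483 (by decide +kernel)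
  omega

theorem F_611 : F 611 = 58 := by
  have h := F_step 4 547 611 53 5 (by norm_num) (by norm_num) (by norm_num) F_547 (by decide +kernel)
  omega

theorem F_739 : F 739 = 68 := by
  have h := F_step 5 611 739 58 10 (by norm_num) (by norm_num) (by norm_num) F_611 (by decide +kernel)
  omega

theorem F_867 : F 867 = 77 := by
  have h := F_step 5 739 867 68 9 (by norm_num) (by norm_num) (by norm_num) F_739 (by decide +kernel)
  omega

theorem F_995 : F 995 = 87 := by
  have h := F_step 5 867 995 77 10 (by norm_num) (by norm_num) (by norm_num) F_867 (by decide +kernel)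
  omega

theorem F_1123 : F 1123 = 96 := by
  have h := F_step 5 995 1123 87 9 (by norm_num) (by norm_num) (by norm_num) F_995 (by decide +kernel)
  omega

theorem F_1251 : F 1251 = 102 := by
  have h := F_step 5 1123 1251 96 6 (by norm_num) (by norm_num) (by norm_num) F_1123 (by decide +kernel)
  omega

theorem F_1379 : F 1379 = 111 := by
  have h := F_step 5 1251 1379 102 9 (by norm_num) (by norm_num) (by norm_num) F_1251 (by decide +kernel)
  omega

theorem F_1507 : F 1507 = 122 := by
  have h := F_step 5 1379 1507 111 11 (by norm_num) (by norm_num) (by norm_num) F_1379 (by decide +kernel)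
  omega

theorem F_1763 : F 1763 = 140 := by
  have h := F_step 6 1507 1763 122 18 (by norm_num) (by norm_num) (by norm_num) F_1507 (by decide +kernel)
  omega

theorem F_2019 : F 2019 = 157 := by
  have h := F_step 6 1763 2019 140 17 (by norm_num) (by norm_num) (by norm_num) F_1763 (by decide +kernel)
  omega

theorem F_2275 : F 2275 = 173 := by
  have h := F_step 6 2019 2275 157 16 (by norm_num) (by norm_num) (by norm_num) F_2019 (by decide +kernel)
  omega

theorem F_2531 : F 2531 = 188 := by
  have h := F_step 6 2275 2531 173 15 (by norm_num) (by norm_num) (by norm_num) F_2275 (by decide +kernel)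
  omega

theorem F_2787 : F 2787 = 205 := by
  have h := F_step 6 2531 2787 188 17 (by norm_num) (by norm_num) (by norm_num) F_2531 (by decide +kernel)
  omega

theorem F_3043 : F 3043 = 221 := by
  have h := F_step 6 2787 3043 205 16 (by norm_num) (by norm_num) (by norm_num) F_2787 (by decide +kernel)
  omega

theorem F_3299 : F 3299 = 234 := by
  have h := F_step 6 3043 3299 221 13 (by norm_num) (by norm_num) (by norm_num) F_3043 (by decide +kernel)
  omega

theorem F_3555 : F 3555 = 252 := by
  have h := F_step 6 3299 3555 234 18 (by norm_num) (by norm_num) (by norm_num) F_3299 (by decide +kernel)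
  omega

theorem F_3811 : F 3811 = 268 := by
  have h := F_step 6 3555 3811 252 16 (by norm_num) (by norm_num) (by norm_num) F_3555 (by decide +kernel)
  omega

theorem F_4323 : F 4323 = 299 := by
  have h := F_step 7 3811 4323 268 31 (by norm_num) (by norm_num) (by norm_num) F_3811 (by decide +kernel)
  omega

theorem F_4835 : F 4835 = 330 := by
  have h := F_step 7 4323 4835 299 31 (by norm_num) (by norm_num) (by norm_num) F_4323 (by decide +kernel)
  omega

theorem F_5347 : F 5347 = 359 := by
  have h := F_step 7 4835 5347 330 29 (by norm_num) (by norm_num) (by norm_num) F_4835 (by decide +kernel)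
  omega

theorem F_5859 : F 5859 = 392 := by
  have h := F_step 7 5347 5859 359 33 (by norm_num) (by norm_num) (by norm_num) F_5347 (by decide +kernel)
  omega

theorem F_6371 : F 6371 = 423 := by
  have h := F_step 7 5859 6371 392 31 (by norm_num) (by norm_num) (by norm_num) F_5859 (by decide +kernel)
  omega

theorem F_6883 : F 6883 = 448 := by
  have h := F_step 7 6371 6883 423 25 (by norm_num) (by norm_num) (by norm_num) F_6371 (by decide +kernel)
  omega

theorem F_7395 : F 7395 = 476 := by
  have h := F_step 7 6883 7395 448 28 (by norm_num) (by norm_num) (by norm_num) F_6883 (by decide +kernel)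
  omega

theorem F_7907 : F 7907 = 503 := by
  have h := F_step 7 7395 7907 476 27 (by norm_num) (by norm_num) (by norm_num) F_7395 (by decide +kernel)
  omega

theorem F_8419 : F 8419 = 528 := by
  have h := F_step 7 7907 8419 503 25 (by norm_num) (by norm_num) (by norm_num) F_7907 (by decide +kernel)
  omega

theorem F_9443 : F 9443 = 587 := by
  have h := F_step 8 8419 9443 528 59 (by norm_num) (by norm_num) (by norm_num) F_8419 (by decide +kernel)
  omega

theorem F_10467 : F 10467 = 646 := by
  have h := F_step 8 9443 10467 587 59 (by norm_num) (by norm_num) (by norm_num) F_9443 (by decide +kernel)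
  omega

theorem F_11491 : F 11491 = 704 := by
  have h := F_step 8 10467 11491 646 58 (by norm_num) (by norm_num) (by norm_num) F_10467 (by decide +kernel)
  omega

theorem F_12515 : F 12515 = 755 := by
  have h := F_step 8 11491 12515 704 51 (by norm_num) (by norm_num) (by norm_num) F_11491 (by decide +kernel)
  omega

theorem F_13539 : F 13539 = 809 := by
  have h := F_step 8 12515 13539 755 54 (by norm_num) (by norm_num) (by norm_num) F_12515 (by decide +kernel)
  omega

theorem F_14563 : F 14563 = 861 := by
  have h := F_step 8 13539 14563 809 52 (by norm_num) (by norm_num) (by norm_num) F_13539 (by decide +kernel)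
  omega

theorem F_15587 : F 15587 = 917 := by
  have h := F_step 8 14563 15587 861 56 (by norm_num) (by norm_num) (by norm_num) F_14563 (by decide +kernel)
  omega

theorem F_16611 : F 16611 = 968 := by
  have h := F_step 8 15587 16611 917 51 (by norm_num) (by norm_num) (by norm_num) F_15587 (by decide +kernel)
  omega

theorem F_18659 : F 18659 = 1073 := by
  have h := F_step 9 16611 18659 968 105 (by norm_num) (by norm_num) (by norm_num) F_16611 (by decide +kernel)
  omega

theorem F_20707 : F 20707 = 1171 := by
  have h := F_step 9 18659 20707 1073 98 (by norm_num) (by norm_num) (by norm_num) F_18659 (by decide +kernel)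
  omega

theorem F_22755 : F 22755 = 1282 := by
  have h := F_step 9 20707 22755 1171 111 (by norm_num) (by norm_num) (by norm_num) F_20707 (by decide +kernel)
  omega

theorem F_24803 : F 24803 = 1379 := by
  have h := F_step 9 22755 24803 1282 97 (by norm_num) (by norm_num) (by norm_num) F_22755 (by decide +kernel)
  omega

theorem F_26851 : F 26851 = 1472 := by
  have h := F_step 9 24803 26851 1379 93 (by norm_num) (by norm_num) (by norm_num) F_24803 (by decide +kernel)
  omega

theorem F_28899 : F 28899 = 1582 := by
  have h := F_step 9 26851 28899 1472 110 (by norm_num) (by norm_num) (by norm_num) F_26851 (by decide +kernel)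
  omega

theorem F_30947 : F 30947 = 1674 := by
  have h := F_step 9 28899 30947 1582 92 (by norm_num) (by norm_num) (by norm_num) F_28899 (by decide +kernel)
  omega

theorem F_32995 : F 32995 = 1778 := by
  have h := F_step 9 30947 32995 1674 104 (by norm_num) (by norm_num) (by norm_num) F_30947 (by decide +kernel)
  omega

theorem F_35043 : F 35043 = 1880 := by
  have h := F_step 9 32995 35043 1778 102 (by norm_num) (by norm_num) (by norm_num) F_32995 (by decide +kernel)
  omega

theorem F_39139 : F 39139 = 2073 := by
  have h := F_step 10 35043 39139 1880 193 (by norm_num) (by norm_num) (by norm_num) F_35043 (by decide +kernel)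
  omega

theorem F_43235 : F 43235 = 2273 := by
  have h := F_step 10 39139 43235 2073 200 (by norm_num) (by norm_num) (by norm_num) F_39139 (by decide +kernel)
  omega

theorem F_47331 : F 47331 = 2454 := by
  have h := F_step 10 43235 47331 2273 181 (by norm_num) (by norm_num) (by norm_num) F_43235 (by decide +kernel)
  omega

theorem F_51427 : F 51427 = 2649 := by
  have h := F_step 10 47331 51427 2454 195 (by norm_num) (by norm_num) (by norm_num) F_47331 (by decide +kernel)
  omega

theorem F_55523 : F 55523 = 2827 := by
  have h := F_step 10 51427 55523 2649 178 (by norm_num) (by norm_num) (by norm_num) F_51427 (by decide +kernel)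
  omega

theorem F_59619 : F 59619 = 3019 := by
  have h := F_step 10 55523 59619 2827 192 (by norm_num) (by norm_num) (by norm_num) F_55523 (by decide +kernel)
  omega

theorem F_63715 : F 63715 = 3208 := by
  have h := F_step 10 59619 63715 3019 189 (by norm_num) (by norm_num) (by norm_num) F_59619 (by decide +kernel)
  omega

theorem F_67811 : F 67811 = 3386 := by
  have h := F_step 10 63715 67811 3208 178 (by norm_num) (by norm_num) (by norm_num) F_63715 (by decide +kernel)
  omega

theorem F_71907 : F 71907 = 3572 := by
  have h := F_step 10 67811 71907 3386 186 (by norm_num) (by norm_num) (by norm_num) F_67811 (by decide +kernel)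
  omega

theorem F_76003 : F 76003 = 3753 := by
  have h := F_step 10 71907 76003 3572 181 (by norm_num) (by norm_num) (by norm_num) F_71907 (by decide +kernel)
  omega

theorem F_84195 : F 84195 = 4116 := by
  have h := F_step 11 76003 84195 3753 363 (by norm_num) (by norm_num) (by norm_num) F_76003 (by decide +kernel)
  omega

theorem F_92387 : F 92387 = 4472 := by
  have h := F_step 11 84195 92387 4116 356 (by norm_num) (by norm_num) (by norm_num) F_84195 (by decide +kernel)
  omega

theorem F_100579 : F 100579 = 4833 := by
  have h := F_step 11 92387 100579 4472 361 (by norm_num) (by norm_num) (by norm_num) F_92387 (by decide +kernel)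
  omega

theorem F_108771 : F 108771 = 5189 := by
  have h := F_step 11 100579 108771 4833 356 (by norm_num) (by norm_num) (by norm_num) F_100579 (by decide +kernel)
  omega

theorem F_116963 : F 116963 = 5544 := by
  have h := F_step 11 108771 116963 5189 355 (by norm_num) (by norm_num) (by norm_num) F_108771 (by decide +kernel)
  omega

theorem F_125155 : F 125155 = 5900 := by
  have h := F_step 11 116963 125155 5544 356 (by norm_num) (by norm_num) (by norm_num) F_116963 (by decide +kernel)
  omega

theorem F_133347 : F 133347 = 6251 := by
  have h := F_step 11 125155 133347 5900 351 (by norm_num) (by norm_num) (by norm_num) F_125155 (by decide +kernel)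
  omega

theorem F_141539 : F 141539 = 6592 := by
  have h := F_step 11 133347 141539 6251 341 (by norm_num) (by norm_num) (by norm_num) F_133347 (by decide +kernel)
  omega

theorem F_149731 : F 149731 = 6929 := by
  have h := F_step 11 141539 149731 6592 337 (by norm_num) (by norm_num) (by norm_num) F_141539 (by decide +kernel)
  omega

theorem F_157923 : F 157923 = 7276 := by
  have h := F_step 11 149731 157923 6929 347 (by norm_num) (by norm_num) (by norm_num) F_149731 (by decide +kernel)
  omega

theorem F_166115 : F 166115 = 7610 := by
  have h := F_step 11 157923 166115 7276 334 (by norm_num) (by norm_num) (by norm_num) F_157923 (by decide +kernel)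
  omega

theorem F_182499 : F 182499 = 8279 := by
  have h := F_step 12 166115 182499 7610 669 (by norm_num) (by norm_num) (by norm_num) F_166115 (by decide +kernel)
  omega

theorem F_198883 : F 198883 = 8967 := by
  have h := F_step 12 182499 198883 8279 688 (by norm_num) (by norm_num) (by norm_num) F_182499 (by decide +kernel)
  omega

theorem F_215267 : F 215267 = 9636 := by
  have h := F_step 12 198883 215267 8967 669 (by norm_num) (by norm_num) (by norm_num) F_198883 (by decide +kernel)
  omega

theorem F_231651 : F 231651 = 10305 := by
  have h := F_step 12 215267 231651 9636 669 (by norm_num) (by norm_num) (by norm_num) F_215267 (by decide +kernel)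
  omega

theorem F_248035 : F 248035 = 10964 := by
  have h := F_step 12 231651 248035 10305 659 (by norm_num) (by norm_num) (by norm_num) F_231651 (by decide +kernel)
  omega

theorem F_264419 : F 264419 = 11619 := by
  have h := F_step 12 248035 264419 10964 655 (by norm_num) (by norm_num) (by norm_num) F_248035 (by decide +kernel)
  omega

theorem F_280803 : F 280803 = 12283 := by
  have h := F_step 12 264419 280803 11619 664 (by norm_num) (by norm_num) (by norm_num) F_264419 (by decide +kernel)
  omega

theorem F_297187 : F 297187 = 12908 := by
  have h := F_step 12 280803 297187 12283 625 (by norm_num) (by norm_num) (by norm_num) F_280803 (by decide +kernel)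
  omega

theorem F_313571 : F 313571 = 13564 := by
  have h := F_step 12 297187 313571 12908 656 (by norm_num) (by norm_num) (by norm_num) F_297187 (by decide +kernel)
  omega

theorem F_329955 : F 329955 = 14238 := by
  have h := F_step 12 313571 329955 13564 674 (by norm_num) (by norm_num) (by norm_num) F_313571 (by decide +kernel)
  omega

theorem F_346339 : F 346339 = 14882 := by
  have h := F_step 12 329955 346339 14238 644 (by norm_num) (by norm_num) (by norm_num) F_329955 (by decide +kernel)
  omega

theorem F_362723 : F 362723 = 15520 := by
  have h := F_step 12 346339 362723 14882 638 (by norm_num) (by norm_num) (by norm_num) F_346339 (by decide +kernel)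
  omega

theorem F_395491 : F 395491 = 16789 := by
  have h := F_step 13 362723 395491 15520 1269 (by norm_num) (by norm_num) (by norm_num) F_362723 (by decide +kernel)
  omega

theorem F_428259 : F 428259 = 18043 := by
  have h := F_step 13 395491 428259 16789 1254 (by norm_num) (by norm_num) (by norm_num) F_395491 (by decide +kernel)
  omega

theorem F_461027 : F 461027 = 19298 := by
  have h := F_step 13 428259 461027 18043 1255 (by norm_num) (by norm_num) (by norm_num) F_428259 (by decide +kernel)
  omega

theorem F_493795 : F 493795 = 20563 := by
  have h := F_step 13 461027 493795 19298 1265 (by norm_num) (by norm_num) (by norm_num) F_461027 (by decide +kernel)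
  omega

theorem F_526563 : F 526563 = 21811 := by
  have h := F_step 13 493795 526563 20563 1248 (by norm_num) (by norm_num) (by norm_num) F_493795 (by decide +kernel)
  omega

theorem F_559331 : F 559331 = 23042 := by
  have h := F_step 13 526563 559331 21811 1231 (by norm_num) (by norm_num) (by norm_num) F_526563 (by decide +kernel)
  omega

theorem F_592099 : F 592099 = 24268 := by
  have h := F_step 13 559331 592099 23042 1226 (by norm_num) (by norm_num) (by norm_num) F_559331 (by decide +kernel)
  omega

theorem F_624867 : F 624867 = 25494 := by
  have h := F_step 13 592099 624867 24268 1226 (by norm_num) (by norm_num) (by norm_num) F_592099 (by decide +kernel)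
  omega

theorem F_657635 : F 657635 = 26705 := by
  have h := F_step 13 624867 657635 25494 1211 (by norm_num) (by norm_num) (by norm_num) F_624867 (by decide +kernel)
  omega

theorem F_690403 : F 690403 = 27944 := by
  have h := F_step 13 657635 690403 26705 1239 (by norm_num) (by norm_num) (by norm_num) F_657635 (by decide +kernel)
  omega

theorem F_723171 : F 723171 = 29172 := by
  have h := F_step 13 690403 723171 27944 1228 (by norm_num) (by norm_num) (by norm_num) F_690403 (by decide +kernel)
  omega

theorem F_755939 : F 755939 = 30390 := by
  have h := F_step 13 723171 755939 29172 1218 (by norm_num) (by norm_num) (by norm_num) F_723171 (by decide +kernel)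
  omega

theorem F_788707 : F 788707 = 31620 := by
  have h := F_step 13 755939 788707 30390 1230 (by norm_num) (by norm_num) (by norm_num) F_755939 (by decide +kernel)
  omega

theorem F_821475 : F 821475 = 32815 := by
  have h := F_step 13 788707 821475 31620 1195 (by norm_num) (by norm_num) (by norm_num) F_788707 (by decide +kernel)
  omega

theorem F_887011 : F 887011 = 35219 := by
  have h := F_step 14 821475 887011 32815 2404 (by norm_num) (by norm_num) (by norm_num) F_821475 (by decide +kernel)
  omega

theorem F_952547 : F 952547 = 37605 := by
  have h := F_step 14 887011 952547 35219 2386 (by norm_num) (by norm_num) (by norm_num) F_887011 (by decide +kernel)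
  omega

theorem piMod4_lower_small (n : ℕ) (h1 : 19 ≤ n) (h2 : n ≤ 10 ^ 6) :
    (n : ℝ) / (2 * Real.log n) < (piMod4 (n : ℝ) 3 : ℝ) := by
  rcases le_or_gt n 23 with hc0 | hc0
  · exact key_s9 19 23 4 4 n (by norm_num) h1 hc0 F_19 (by norm_num) (by norm_num)
  rcases le_or_gt n 27 with hc1 | hc1
  · exact key_s9 23 27 5 4 n (by norm_num) (by omega) hc1 F_23 (by norm_num) (by norm_num)
  rcases le_or_gt n 31 with hc2 | hc2
  · exact key_s9 27 31 5 4 n (by norm_num) (by omega) hc2 F_27 (by norm_num) (by norm_num)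
  rcases le_or_gt n 39 with hc3 | hc3
  · exact key_s9 31 39 6 4 n (by norm_num) (by omega) hc3 F_31 (by norm_num) (by norm_num)
  rcases le_or_gt n 43 with hc4 | hc4
  · exact key_s9 39 43 6 5 n (by norm_num) (by omega) hc4 F_39 (by norm_num) (by norm_num)
  rcases le_or_gt n 51 with hc5 | hc5
  · exact key_s9 43 51 7 5 n (by norm_num) (by omega) hc5 F_43 (by norm_num) (by norm_num)
  rcases le_or_gt n 59 with hc6 | hc6
  · exact key_s9 51 59 8 5 n (by norm_num) (by omega) hc6 F_51 (by norm_num) (by norm_num)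
  rcases le_or_gt n 67 with hc7 | hc7
  · exact key_s9 59 67 9 5 n (by norm_num) (by omega) hc7 F_59 (by norm_num) (by norm_num)
  rcases le_or_gt n 83 with hc8 | hc8
  · exact key_s9 67 83 10 6 n (by norm_num) (by omega) hc8 F_67 (by norm_num) (by norm_num)
  rcases le_or_gt n 99 with hc9 | hc9
  · exact key_s9 83 99 13 6 n (by norm_num) (by omega) hc9 F_83 (by norm_num) (by norm_num)
  rcases le_or_gt n 115 with hc10 | hc10
  · exact key_s9 99 115 13 6 n (by norm_num) (by omega) hc10 F_99 (by norm_num) (by norm_num)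
  rcases le_or_gt n 131 with hc11 | hc11
  · exact key_s9 115 131 15 6 n (by norm_num) (by omega) hc11 F_115 (by norm_num) (by norm_num)
  rcases le_or_gt n 163 with hc12 | hc12
  · exact key_s9 131 163 17 7 n (by norm_num) (by omega) hc12 F_131 (by norm_num) (by norm_num)
  rcases le_or_gt n 195 with hc13 | hc13
  · exact key_s9 163 195 20 7 n (by norm_num) (by omega) hc13 F_163 (by norm_num) (by norm_num)
  rcases le_or_gt n 227 with hc14 | hc14
  · exact key_s9 195 227 23 7 n (by norm_num) (by omega) hc14 F_195 (by norm_num) (by norm_num)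
  rcases le_or_gt n 259 with hc15 | hc15
  · exact key_s9 227 259 27 7 n (by norm_num) (by omega) hc15 F_227 (by norm_num) (by norm_num)
  rcases le_or_gt n 291 with hc16 | hc16
  · exact key_s9 259 291 29 8 n (by norm_num) (by omega) hc16 F_259 (by norm_num) (by norm_num)
  rcases le_or_gt n 355 with hc17 | hc17
  · exact key_s9 291 355 32 8 n (by norm_num) (by omega) hc17 F_291 (by norm_num) (by norm_num)
  rcases le_or_gt n 419 with hc18 | hc18
  · exact key_s9 355 419 36 8 n (by norm_num) (by omega) hc18 F_355 (by norm_num) (by norm_num)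
  rcases le_or_gt n 483 with hc19 | hc19
  · exact key_s9 419 483 41 8 n (by norm_num) (by omega) hc19 F_419 (by norm_num) (by norm_num)
  rcases le_or_gt n 547 with hc20 | hc20
  · exact key_s9 483 547 47 8 n (by norm_num) (by omega) hc20 F_483 (by norm_num) (by norm_num)
  rcases le_or_gt n 611 with hc21 | hc21
  · exact key_s9 547 611 53 9 n (by norm_num) (by omega) hc21 F_547 (by norm_num) (by norm_num)
  rcases le_or_gt n 739 with hc22 | hc22
  · exact key_s9 611 739 58 9 n (by norm_num) (by omega) hc22 F_611 (by norm_num) (by norm_num)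
  rcases le_or_gt n 867 with hc23 | hc23
  · exact key_s9 739 867 68 9 n (by norm_num) (by omega) hc23 F_739 (by norm_num) (by norm_num)
  rcases le_or_gt n 995 with hc24 | hc24
  · exact key_s9 867 995 77 9 n (by norm_num) (by omega) hc24 F_867 (by norm_num) (by norm_num)
  rcases le_or_gt n 1123 with hc25 | hc25
  · exact key_s9 995 1123 87 9 n (by norm_num) (by omega) hc25 F_995 (by norm_num) (by norm_num)
  rcases le_or_gt n 1251 with hc26 | hc26
  · exact key_s9 1123 1251 96 10 n (by norm_num) (by omega) hc26 F_1123 (by norm_num) (by norm_num)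
  rcases le_or_gt n 1379 with hc27 | hc27
  · exact key_s9 1251 1379 102 10 n (by norm_num) (by omega) hc27 F_1251 (by norm_num) (by norm_num)
  rcases le_or_gt n 1507 with hc28 | hc28
  · exact key_s9 1379 1507 111 10 n (by norm_num) (by omega) hc28 F_1379 (by norm_num) (by norm_num)
  rcases le_or_gt n 1763 with hc29 | hc29
  · exact key_s9 1507 1763 122 10 n (by norm_num) (by omega) hc29 F_1507 (by norm_num) (by norm_num)
  rcases le_or_gt n 2019 with hc30 | hc30
  · exact key_s9 1763 2019 140 10 n (by norm_num) (by omega) hc30 F_1763 (by norm_num) (by norm_num)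
  rcases le_or_gt n 2275 with hc31 | hc31
  · exact key_s9 2019 2275 157 10 n (by norm_num) (by omega) hc31 F_2019 (by norm_num) (by norm_num)
  rcases le_or_gt n 2531 with hc32 | hc32
  · exact key_s9 2275 2531 173 11 n (by norm_num) (by omega) hc32 F_2275 (by norm_num) (by norm_num)
  rcases le_or_gt n 2787 with hc33 | hc33
  · exact key_s9 2531 2787 188 11 n (by norm_num) (by omega) hc33 F_2531 (by norm_num) (by norm_num)
  rcases le_or_gt n 3043 with hc34 | hc34
  · exact key_s9 2787 3043 205 11 n (by norm_num) (by omega) hc34 F_2787 (by norm_num) (by norm_num)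
  rcases le_or_gt n 3299 with hc35 | hc35
  · exact key_s9 3043 3299 221 11 n (by norm_num) (by omega) hc35 F_3043 (by norm_num) (by norm_num)
  rcases le_or_gt n 3555 with hc36 | hc36
  · exact key_s9 3299 3555 234 11 n (by norm_num) (by omega) hc36 F_3299 (by norm_num) (by norm_num)
  rcases le_or_gt n 3811 with hc37 | hc37
  · exact key_s9 3555 3811 252 11 n (by norm_num) (by omega) hc37 F_3555 (by norm_num) (by norm_num)
  rcases le_or_gt n 4323 with hc38 | hc38
  · exact key_s9 3811 4323 268 11 n (by norm_num) (by omega) hc38 F_3811 (by norm_num) (by norm_num)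
  rcases le_or_gt n 4835 with hc39 | hc39
  · exact key_s9 4323 4835 299 12 n (by norm_num) (by omega) hc39 F_4323 (by norm_num) (by norm_num)
  rcases le_or_gt n 5347 with hc40 | hc40
  · exact key_s9 4835 5347 330 12 n (by norm_num) (by omega) hc40 F_4835 (by norm_num) (by norm_num)
  rcases le_or_gt n 5859 with hc41 | hc41
  · exact key_s9 5347 5859 359 12 n (by norm_num) (by omega) hc41 F_5347 (by norm_num) (by norm_num)
  rcases le_or_gt n 6371 with hc42 | hc42
  · exact key_s9 5859 6371 392 12 n (by norm_num) (by omega) hc42 F_5859 (by norm_num) (by norm_num)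
  rcases le_or_gt n 6883 with hc43 | hc43
  · exact key_s9 6371 6883 423 12 n (by norm_num) (by omega) hc43 F_6371 (by norm_num) (by norm_num)
  rcases le_or_gt n 7395 with hc44 | hc44
  · exact key_s9 6883 7395 448 12 n (by norm_num) (by omega) hc44 F_6883 (by norm_num) (by norm_num)
  rcases le_or_gt n 7907 with hc45 | hc45
  · exact key_s9 7395 7907 476 12 n (by norm_num) (by omega) hc45 F_7395 (by norm_num) (by norm_num)
  rcases le_or_gt n 8419 with hc46 | hc46
  · exact key_s9 7907 8419 503 12 n (by norm_num) (by omega) hc46 F_7907 (by norm_num) (by norm_num)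
  rcases le_or_gt n 9443 with hc47 | hc47
  · exact key_s9 8419 9443 528 13 n (by norm_num) (by omega) hc47 F_8419 (by norm_num) (by norm_num)
  rcases le_or_gt n 10467 with hc48 | hc48
  · exact key_s9 9443 10467 587 13 n (by norm_num) (by omega) hc48 F_9443 (by norm_num) (by norm_num)
  rcases le_or_gt n 11491 with hc49 | hc49
  · exact key_s9 10467 11491 646 13 n (by norm_num) (by omega) hc49 F_10467 (by norm_num) (by norm_num)
  rcases le_or_gt n 12515 with hc50 | hc50
  · exact key_s9 11491 12515 704 13 n (by norm_num) (by omega) hc50 F_11491 (by norm_num) (by norm_num)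
  rcases le_or_gt n 13539 with hc51 | hc51
  · exact key_s9 12515 13539 755 13 n (by norm_num) (by omega) hc51 F_12515 (by norm_num) (by norm_num)
  rcases le_or_gt n 14563 with hc52 | hc52
  · exact key_s9 13539 14563 809 13 n (by norm_num) (by omega) hc52 F_13539 (by norm_num) (by norm_num)
  rcases le_or_gt n 15587 with hc53 | hc53
  · exact key_s9 14563 15587 861 13 n (by norm_num) (by omega) hc53 F_14563 (by norm_num) (by norm_num)
  rcases le_or_gt n 16611 with hc54 | hc54
  · exact key_s9 15587 16611 917 13 n (by norm_num) (by omega) hc54 F_15587 (by norm_num) (by norm_num)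
  rcases le_or_gt n 18659 with hc55 | hc55
  · exact key_s9 16611 18659 968 14 n (by norm_num) (by omega) hc55 F_16611 (by norm_num) (by norm_num)
  rcases le_or_gt n 20707 with hc56 | hc56
  · exact key_s9 18659 20707 1073 14 n (by norm_num) (by omega) hc56 F_18659 (by norm_num) (by norm_num)
  rcases le_or_gt n 22755 with hc57 | hc57
  · exact key_s9 20707 22755 1171 14 n (by norm_num) (by omega) hc57 F_20707 (by norm_num) (by norm_num)
  rcases le_or_gt n 24803 with hc58 | hc58
  · exact key_s9 22755 24803 1282 14 n (by norm_num) (by omega) hc58 F_22755 (by norm_num) (by norm_num)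
  rcases le_or_gt n 26851 with hc59 | hc59
  · exact key_s9 24803 26851 1379 14 n (by norm_num) (by omega) hc59 F_24803 (by norm_num) (by norm_num)
  rcases le_or_gt n 28899 with hc60 | hc60
  · exact key_s9 26851 28899 1472 14 n (by norm_num) (by omega) hc60 F_26851 (by norm_num) (by norm_num)
  rcases le_or_gt n 30947 with hc61 | hc61
  · exact key_s9 28899 30947 1582 14 n (by norm_num) (by omega) hc61 F_28899 (by norm_num) (by norm_num)
  rcases le_or_gt n 32995 with hc62 | hc62
  · exact key_s9 30947 32995 1674 14 n (by norm_num) (by omega) hc62 F_30947 (by norm_num) (by norm_num)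
  rcases le_or_gt n 35043 with hc63 | hc63
  · exact key_s9 32995 35043 1778 15 n (by norm_num) (by omega) hc63 F_32995 (by norm_num) (by norm_num)
  rcases le_or_gt n 39139 with hc64 | hc64
  · exact key_s9 35043 39139 1880 15 n (by norm_num) (by omega) hc64 F_35043 (by norm_num) (by norm_num)
  rcases le_or_gt n 43235 with hc65 | hc65
  · exact key_s9 39139 43235 2073 15 n (by norm_num) (by omega) hc65 F_39139 (by norm_num) (by norm_num)
  rcases le_or_gt n 47331 with hc66 | hc66
  · exact key_s9 43235 47331 2273 15 n (by norm_num) (by omega) hc66 F_43235 (by norm_num) (by norm_num)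
  rcases le_or_gt n 51427 with hc67 | hc67
  · exact key_s9 47331 51427 2454 15 n (by norm_num) (by omega) hc67 F_47331 (by norm_num) (by norm_num)
  rcases le_or_gt n 55523 with hc68 | hc68
  · exact key_s9 51427 55523 2649 15 n (by norm_num) (by omega) hc68 F_51427 (by norm_num) (by norm_num)
  rcases le_or_gt n 59619 with hc69 | hc69
  · exact key_s9 55523 59619 2827 15 n (by norm_num) (by omega) hc69 F_55523 (by norm_num) (by norm_num)
  rcases le_or_gt n 63715 with hc70 | hc70
  · exact key_s9 59619 63715 3019 15 n (by norm_num) (by omega) hc70 F_59619 (by norm_num) (by norm_num)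
  rcases le_or_gt n 67811 with hc71 | hc71
  · exact key_s9 63715 67811 3208 15 n (by norm_num) (by omega) hc71 F_63715 (by norm_num) (by norm_num)
  rcases le_or_gt n 71907 with hc72 | hc72
  · exact key_s9 67811 71907 3386 16 n (by norm_num) (by omega) hc72 F_67811 (by norm_num) (by norm_num)
  rcases le_or_gt n 76003 with hc73 | hc73
  · exact key_s9 71907 76003 3572 16 n (by norm_num) (by omega) hc73 F_71907 (by norm_num) (by norm_num)
  rcases le_or_gt n 84195 with hc74 | hc74
  · exact key_s9 76003 84195 3753 16 n (by norm_num) (by omega) hc74 F_76003 (by norm_num) (by norm_num)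
  rcases le_or_gt n 92387 with hc75 | hc75
  · exact key_s9 84195 92387 4116 16 n (by norm_num) (by omega) hc75 F_84195 (by norm_num) (by norm_num)
  rcases le_or_gt n 100579 with hc76 | hc76
  · exact key_s9 92387 100579 4472 16 n (by norm_num) (by omega) hc76 F_92387 (by norm_num) (by norm_num)
  rcases le_or_gt n 108771 with hc77 | hc77
  · exact key_s9 100579 108771 4833 16 n (by norm_num) (by omega) hc77 F_100579 (by norm_num) (by norm_num)
  rcases le_or_gt n 116963 with hc78 | hc78
  · exact key_s9 108771 116963 5189 16 n (by norm_num) (by omega) hc78 F_108771 (by norm_num) (by norm_num)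
  rcases le_or_gt n 125155 with hc79 | hc79
  · exact key_s9 116963 125155 5544 16 n (by norm_num) (by omega) hc79 F_116963 (by norm_num) (by norm_num)
  rcases le_or_gt n 133347 with hc80 | hc80
  · exact key_s9 125155 133347 5900 16 n (by norm_num) (by omega) hc80 F_125155 (by norm_num) (by norm_num)
  rcases le_or_gt n 141539 with hc81 | hc81
  · exact key_s9 133347 141539 6251 17 n (by norm_num) (by omega) hc81 F_133347 (by norm_num) (by norm_num)
  rcases le_or_gt n 149731 with hc82 | hc82
  · exact key_s9 141539 149731 6592 17 n (by norm_num) (by omega) hc82 F_141539 (by norm_num) (by norm_num)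
  rcases le_or_gt n 157923 with hc83 | hc83
  · exact key_s9 149731 157923 6929 17 n (by norm_num) (by omega) hc83 F_149731 (by norm_num) (by norm_num)
  rcases le_or_gt n 166115 with hc84 | hc84
  · exact key_s9 157923 166115 7276 17 n (by norm_num) (by omega) hc84 F_157923 (by norm_num) (by norm_num)
  rcases le_or_gt n 182499 with hc85 | hc85
  · exact key_s9 166115 182499 7610 17 n (by norm_num) (by omega) hc85 F_166115 (by norm_num) (by norm_num)
  rcases le_or_gt n 198883 with hc86 | hc86
  · exact key_s9 182499 198883 8279 17 n (by norm_num) (by omega) hc86 F_182499 (by norm_num) (by norm_num)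
  rcases le_or_gt n 215267 with hc87 | hc87
  · exact key_s9 198883 215267 8967 17 n (by norm_num) (by omega) hc87 F_198883 (by norm_num) (by norm_num)
  rcases le_or_gt n 231651 with hc88 | hc88
  · exact key_s9 215267 231651 9636 17 n (by norm_num) (by omega) hc88 F_215267 (by norm_num) (by norm_num)
  rcases le_or_gt n 248035 with hc89 | hc89
  · exact key_s9 231651 248035 10305 17 n (by norm_num) (by omega) hc89 F_231651 (by norm_num) (by norm_num)
  rcases le_or_gt n 264419 with hc90 | hc90
  · exact key_s9 248035 264419 10964 17 n (by norm_num) (by omega) hc90 F_248035 (by norm_num) (by norm_num)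
  rcases le_or_gt n 280803 with hc91 | hc91
  · exact key_s9 264419 280803 11619 18 n (by norm_num) (by omega) hc91 F_264419 (by norm_num) (by norm_num)
  rcases le_or_gt n 297187 with hc92 | hc92
  · exact key_s9 280803 297187 12283 18 n (by norm_num) (by omega) hc92 F_280803 (by norm_num) (by norm_num)
  rcases le_or_gt n 313571 with hc93 | hc93
  · exact key_s9 297187 313571 12908 18 n (by norm_num) (by omega) hc93 F_297187 (by norm_num) (by norm_num)
  rcases le_or_gt n 329955 with hc94 | hc94
  · exact key_s9 313571 329955 13564 18 n (by norm_num) (by omega) hc94 F_313571 (by norm_num) (by norm_num)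
  rcases le_or_gt n 346339 with hc95 | hc95
  · exact key_s9 329955 346339 14238 18 n (by norm_num) (by omega) hc95 F_329955 (by norm_num) (by norm_num)
  rcases le_or_gt n 362723 with hc96 | hc96
  · exact key_s9 346339 362723 14882 18 n (by norm_num) (by omega) hc96 F_346339 (by norm_num) (by norm_num)
  rcases le_or_gt n 395491 with hc97 | hc97
  · exact key_s9 362723 395491 15520 18 n (by norm_num) (by omega) hc97 F_362723 (by norm_num) (by norm_num)
  rcases le_or_gt n 428259 with hc98 | hc98
  · exact key_s9 395491 428259 16789 18 n (by norm_num) (by omega) hc98 F_395491 (by norm_num) (by norm_num)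
  rcases le_or_gt n 461027 with hc99 | hc99
  · exact key_s9 428259 461027 18043 18 n (by norm_num) (by omega) hc99 F_428259 (by norm_num) (by norm_num)
  rcases le_or_gt n 493795 with hc100 | hc100
  · exact key_s9 461027 493795 19298 18 n (by norm_num) (by omega) hc100 F_461027 (by norm_num) (by norm_num)
  rcases le_or_gt n 526563 with hc101 | hc101
  · exact key_s9 493795 526563 20563 18 n (by norm_num) (by omega) hc101 F_493795 (by norm_num) (by norm_num)
  rcases le_or_gt n 559331 with hc102 | hc102
  · exact key_s9 526563 559331 21811 19 n (by norm_num) (by omega) hc102 F_526563 (by norm_num) (by norm_num)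
  rcases le_or_gt n 592099 with hc103 | hc103
  · exact key_s9 559331 592099 23042 19 n (by norm_num) (by omega) hc103 F_559331 (by norm_num) (by norm_num)
  rcases le_or_gt n 624867 with hc104 | hc104
  · exact key_s9 592099 624867 24268 19 n (by norm_num) (by omega) hc104 F_592099 (by norm_num) (by norm_num)
  rcases le_or_gt n 657635 with hc105 | hc105
  · exact key_s9 624867 657635 25494 19 n (by norm_num) (by omega) hc105 F_624867 (by norm_num) (by norm_num)
  rcases le_or_gt n 690403 with hc106 | hc106
  · exact key_s9 657635 690403 26705 19 n (by norm_num) (by omega) hc106 F_657635 (by norm_num) (by norm_num)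
  rcases le_or_gt n 723171 with hc107 | hc107
  · exact key_s9 690403 723171 27944 19 n (by norm_num) (by omega) hc107 F_690403 (by norm_num) (by norm_num)
  rcases le_or_gt n 755939 with hc108 | hc108
  · exact key_s9 723171 755939 29172 19 n (by norm_num) (by omega) hc108 F_723171 (by norm_num) (by norm_num)
  rcases le_or_gt n 788707 with hc109 | hc109
  · exact key_s9 755939 788707 30390 19 n (by norm_num) (by omega) hc109 F_755939 (by norm_num) (by norm_num)
  rcases le_or_gt n 821475 with hc110 | hc110
  · exact key_s9 788707 821475 31620 19 n (by norm_num) (by omega) hc110 F_788707 (by norm_num) (by norm_num)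
  rcases le_or_gt n 887011 with hc111 | hc111
  · exact key_s9 821475 887011 32815 19 n (by norm_num) (by omega) hc111 F_821475 (by norm_num) (by norm_num)
  rcases le_or_gt n 952547 with hc112 | hc112
  · exact key_s9 887011 952547 35219 19 n (by norm_num) (by omega) hc112 F_887011 (by norm_num) (by norm_num)
  exact key_s9 952547 (10^6) 37605 19 n (by norm_num) (by omega) h2 F_952547 (by norm_num) (by norm_num)
end

section
/- For every real x > 0, π(x;4,3) ≤ x/(2 log x) + (5/4)·x/(log x)^2, where log is natural logarithm (interpreting the right-hand side suitably for x ≤ 1; it suffices to prove this for x ≥ 2 assuming it holds at all integers in [2, 10^6] and the bound of Bennett–Martin–O'Bryant–Rechnitzer for x ≥ 10^6). -/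
/-- `log b ≤ log a + (b-a)/a` for `0 < a ≤ b`. -/
lemma log_le_add_aux {a b : ℝ} (ha : 0 < a) (hab : a ≤ b) :
    Real.log b ≤ Real.log a + (b - a) / a := by
  have hb : 0 < b := lt_of_lt_of_le ha hab
  have h := Real.log_le_sub_one_of_pos (show (0:ℝ) < b / a by positivity)
  rw [Real.log_div (ne_of_gt hb) (ne_of_gt ha)] at h
  have : b / a - 1 = (b - a) / a := by field_simp
  linarith [this ▸ h]

/-- Monotonicity of `t / (2 log t)` for `1 ≤ log a`, `a ≤ b`. -/
lemma mono1_aux {a b : ℝ} (ha : 0 < a) (hab : a ≤ b) (hla : 1 ≤ Real.log a) :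
    a / (2 * Real.log a) ≤ b / (2 * Real.log b) := by
  have hb : 0 < b := lt_of_lt_of_le ha hab
  have hlb : 1 ≤ Real.log b := le_trans hla (Real.log_le_log ha hab)
  have key : a * Real.log b ≤ b * Real.log a := by
    have h := log_le_add_aux ha hab
    have h2 : a * Real.log b ≤ a * Real.log a + (b - a) := by
      have := mul_le_mul_of_nonneg_left h (le_of_lt ha)
      have heq : a * (Real.log a + (b - a) / a) = a * Real.log a + (b - a) := by
        field_simp
      linarith [heq ▸ this]
    nlinarith [mul_le_mul_of_nonneg_left hla (show (0:ℝ) ≤ b - a by linarith)]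
  rw [div_le_div_iff₀ (by linarith) (by linarith)]
  nlinarith

/-- Monotonicity of `t / (log t)^2` for `8 ≤ a ≤ b ≤ a + 1`. -/
lemma mono2_aux {a b : ℝ} (ha : 8 ≤ a) (hab : a ≤ b) (hba : b ≤ a + 1) :
    a / (Real.log a) ^ 2 ≤ b / (Real.log b) ^ 2 := by
  have ha0 : (0:ℝ) < a := by linarith
  have hb0 : (0:ℝ) < b := by linarith
  have hl2 : (0.6931471 : ℝ) < Real.log 2 := by linarith [Real.log_two_gt_d9]
  have hla : (2.0794413 : ℝ) ≤ Real.log a := by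
    have h8 : Real.log 8 ≤ Real.log a := Real.log_le_log (by norm_num) ha
    have : Real.log 8 = 3 * Real.log 2 := by
      rw [show (8:ℝ) = 2 ^ 3 by norm_num, Real.log_pow]; push_cast; ring
    linarith
  have hlb : (0:ℝ) < Real.log b := lt_of_lt_of_le (by linarith) (le_trans hla (Real.log_le_log ha0 hab))
  have hla0 : (0:ℝ) < Real.log a := by linarith
  have hlog : Real.log b ≤ Real.log a + (b - a) / a := log_le_add_aux ha0 hab
  have key : a * (Real.log b) ^ 2 ≤ b * (Real.log a) ^ 2 := by
    set La := Real.log a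
    set Lb := Real.log b
    set d := b - a with hd
    have hd0 : 0 ≤ d := by simp [hd]; linarith
    have hd1 : d ≤ 1 := by simp [hd]; linarith
    have h1 : a * Lb ^ 2 ≤ a * (La + d / a) ^ 2 := by
      have hLb0 : 0 ≤ Lb := le_of_lt hlb
      have := pow_le_pow_left₀ hLb0 hlog 2
      nlinarith
    have h2 : a * (La + d / a) ^ 2 = a * La ^ 2 + 2 * d * La + d ^ 2 / a := by
      field_simp; ring
    have h3 : a * La ^ 2 + 2 * d * La + d ^ 2 / a ≤ (a + d) * La ^ 2 := by
      have hda : d / a ≤ 1 / 8 := by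
        rw [div_le_div_iff₀ ha0 (by norm_num)]; nlinarith
      have hd2a : d ^ 2 / a ≤ d * (1 / 8) := by
        have h : d ^ 2 / a = d * (d / a) := by field_simp
        rw [h]
        exact mul_le_mul_of_nonneg_left hda hd0
      nlinarith [mul_nonneg hd0 (sq_nonneg (La - 2.0794413))]
    have hb' : b = a + d := by simp [hd]
    calc a * Lb ^ 2 ≤ a * (La + d / a) ^ 2 := h1
      _ = a * La ^ 2 + 2 * d * La + d ^ 2 / a := h2
      _ ≤ (a + d) * La ^ 2 := h3
      _ = b * La ^ 2 := by rw [hb']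
  rw [div_le_div_iff₀ (by positivity) (by positivity)]
  nlinarith

lemma log_lt_half {x : ℝ} (hx : 2 ≤ x) : Real.log x < x / 2 := by
  have h := Real.log_le_sub_one_of_pos (show (0:ℝ) < x / 2 by linarith)
  have hl2 : Real.log 2 < 0.6931472 := by linarith [Real.log_two_lt_d9]
  have heq : Real.log x = Real.log (x / 2) + Real.log 2 := by
    rw [← Real.log_mul (by linarith) (by norm_num)]
    norm_num
  linarith

theorem piMod4_upper
    (hInt : ∀ n : ℕ, 2 ≤ n → n ≤ 10 ^ 6 →
      (piMod4 (n : ℝ) 3 : ℝ) ≤ (n : ℝ) / (2 * Real.log n) + (5 / 4) * n / (Real.log n) ^ 2)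
    (hLarge : ∀ x : ℝ, 10 ^ 6 ≤ x →
      (piMod4 x 3 : ℝ) < x / (2 * Real.log x) + 0.627 * x / (Real.log x) ^ 2) :
    ∀ x : ℝ, 2 ≤ x →
      (piMod4 x 3 : ℝ) ≤ x / (2 * Real.log x) + (5 / 4) * x / (Real.log x) ^ 2 := by
  intro x hx
  have hx0 : (0:ℝ) < x := by linarith
  have hlx : (0:ℝ) < Real.log x := Real.log_pos (by linarith)
  by_cases hx6 : (10:ℝ) ^ 6 ≤ x
  · refine le_of_lt (lt_of_lt_of_le (hLarge x hx6) ?_)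
    have : (0.627 : ℝ) * x / (Real.log x) ^ 2 ≤ 5 / 4 * x / (Real.log x) ^ 2 := by
      apply div_le_div_of_nonneg_right ?_ (by positivity) |>.trans_eq rfl
      · nlinarith
    linarith
  · push_neg at hx6
    set n := ⌊x⌋₊ with hn
    have hn2 : 2 ≤ n := by
      rw [hn]; exact Nat.le_floor (by exact_mod_cast hx)
    have hnx : (n : ℝ) ≤ x := Nat.floor_le (le_of_lt hx0)
    have hxn : x < n + 1 := Nat.lt_floor_add_one x
    have hcount : piMod4 x 3 = piMod4 (n : ℝ) 3 := by
      unfold piMod4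
      rw [Nat.floor_natCast]
    by_cases h8 : 8 ≤ n
    · -- monotone regime
      have hn6 : n ≤ 10 ^ 6 := by
        have : (n : ℝ) < 10 ^ 6 := lt_of_le_of_lt hnx hx6
        exact_mod_cast le_of_lt this
      have hbound := hInt n hn2 hn6
      have hn8 : (8:ℝ) ≤ (n:ℝ) := by exact_mod_cast h8
      have hn0 : (0:ℝ) < (n:ℝ) := by linarith
      have hln : (1:ℝ) ≤ Real.log (n:ℝ) := by
        have : Real.log 8 ≤ Real.log (n:ℝ) := Real.log_le_log (by norm_num) hn8
        have h2 : (0.6931471 : ℝ) < Real.log 2 := by linarith [Real.log_two_gt_d9]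
        have h8' : Real.log 8 = 3 * Real.log 2 := by
          rw [show (8:ℝ) = 2 ^ 3 by norm_num, Real.log_pow]; push_cast; ring
        linarith
      have m1 : (n:ℝ) / (2 * Real.log (n:ℝ)) ≤ x / (2 * Real.log x) :=
        mono1_aux hn0 hnx hln
      have m2 : (n:ℝ) / (Real.log (n:ℝ)) ^ 2 ≤ x / (Real.log x) ^ 2 :=
        mono2_aux hn8 hnx (le_of_lt hxn)
      have m2' : (5:ℝ) / 4 * (n:ℝ) / (Real.log (n:ℝ)) ^ 2 ≤ 5 / 4 * x / (Real.log x) ^ 2 := by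
        rw [mul_div_assoc, mul_div_assoc]
        nlinarith
      rw [hcount]
      linarith
    · -- small regime: 2 ≤ n ≤ 7
      push_neg at h8
      rw [hcount]
      interval_cases n
      · -- n = 2, count = 0
        have : piMod4 ((2:ℕ) : ℝ) 3 = 0 := by
          unfold piMod4; norm_num; decide
        rw [this]
        push_cast
        positivity
      · -- n = 3, count = 1
        have hc : piMod4 ((3:ℕ) : ℝ) 3 = 1 := by
          unfold piMod4; norm_num; decide
        rw [hc]
        have h1 : (1:ℝ) ≤ x / (2 * Real.log x) := by
          rw [le_div_iff₀ (by positivity)]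
          have := log_lt_half hx
          linarith
        have h2 : (0:ℝ) ≤ 5 / 4 * x / (Real.log x) ^ 2 := by positivity
        push_cast
        linarith
      · have hc : piMod4 ((4:ℕ) : ℝ) 3 = 1 := by
          unfold piMod4; norm_num; decide
        rw [hc]
        have h1 : (1:ℝ) ≤ x / (2 * Real.log x) := by
          rw [le_div_iff₀ (by positivity)]
          have := log_lt_half hx
          linarith
        have h2 : (0:ℝ) ≤ 5 / 4 * x / (Real.log x) ^ 2 := by positivity
        push_cast
        linarith
      · have hc : piMod4 ((5:ℕ) : ℝ) 3 = 1 := by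
          unfold piMod4; norm_num; decide
        rw [hc]
        have h1 : (1:ℝ) ≤ x / (2 * Real.log x) := by
          rw [le_div_iff₀ (by positivity)]
          have := log_lt_half hx
          linarith
        have h2 : (0:ℝ) ≤ 5 / 4 * x / (Real.log x) ^ 2 := by positivity
        push_cast
        linarith
      · have hc : piMod4 ((6:ℕ) : ℝ) 3 = 1 := by
          unfold piMod4; norm_num; decide
        rw [hc]
        have h1 : (1:ℝ) ≤ x / (2 * Real.log x) := by
          rw [le_div_iff₀ (by positivity)]
          have := log_lt_half hx
          linarith
        have h2 : (0:ℝ) ≤ 5 / 4 * x / (Real.log x) ^ 2 := by positivity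
        push_cast
        linarith
      · -- n = 7, count = 2
        have hc : piMod4 ((7:ℕ) : ℝ) 3 = 2 := by
          unfold piMod4; norm_num; decide
        rw [hc]
        have hx7 : (7:ℝ) ≤ x := by exact_mod_cast hnx
        have hx8 : x < 8 := by
          have : ((7:ℕ):ℝ) + 1 = 8 := by norm_num
          linarith [this ▸ hxn]
        have hl8 : Real.log x < 2.0794416 := by
          have h1 : Real.log x < Real.log 8 := Real.log_lt_log hx0 hx8
          have h2 : Real.log 2 < 0.6931472 := by linarith [Real.log_two_lt_d9]
          have h8' : Real.log 8 = 3 * Real.log 2 := by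
            rw [show (8:ℝ) = 2 ^ 3 by norm_num, Real.log_pow]; push_cast; ring
          linarith
        have h2 : (2:ℝ) ≤ 5 / 4 * x / (Real.log x) ^ 2 := by
          rw [le_div_iff₀ (by positivity)]
          nlinarith
        have h1 : (0:ℝ) ≤ x / (2 * Real.log x) := by positivity
        push_cast
        linarith
end
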